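/- Let R be a ring with quasi-derivation (σ, δ), S = R[x; σ, δ], and let σ' be an endomorphism of R. Suppose p(x) = Σ_{i=0}^n aᵢxⁱ ∈ S satisfies, for every r ∈ R and every j with 1 ≤ j ≤ n, the eigenvector identity Σ_{i=j}^{n} aᵢ f_j^i(r) = α(r)·a_j for some function α : R → R (where f_j^i are the coefficient maps with x^i r = Σ_j f_j^i(r)x^j). Then p(x)·r ∈ R·p(x) + R for every r ∈ R. -/

import Mathlib

/-- In S = R[x;σ,δ], with coefficient maps f_j^i defined by x^i·r = Σ_j f_j^i(r)·x^j,
if p = Σ_{i=0}^n aᵢxⁱ satisfies the eigenvector identity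
Σ_{i=j}^n aᵢ·f_j^i(r) = α(r)·a_j for all r and 1 ≤ j ≤ n (for some α : R → R),
then p·r ∈ R·p + R for all r ∈ R. -/
theorem eigenvector_implies_semi_invariance {R S : Type*} [Ring R] [Ring S]
    (σ : R →+* R) (δ : R → R)
    (ι : R →+* S) (X : S)
    (hcomm : ∀ r : R, X * ι r = ι (σ r) * X + ι (δ r))
    (f : ℕ → ℕ → R → R)
    (hf : ∀ (i : ℕ) (r : R),
      X ^ i * ι r = ∑ j ∈ Finset.range (i + 1), ι (f i j r) * X ^ j)
    (n : ℕ) (a : ℕ → R)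
    (p : S) (hp : p = ∑ i ∈ Finset.range (n + 1), ι (a i) * X ^ i)
    (α : R → R)
    (heig : ∀ (r : R) (j : ℕ), 1 ≤ j → j ≤ n →
      (∑ i ∈ Finset.Icc j n, a i * f i j r) = α r * a j) :
    ∀ r : R, ∃ s₁ s₂ : R, p * ι r = ι s₁ * p + ι s₂ := by
  intro r
  refine ⟨α r, (∑ i ∈ Finset.Icc 0 n, a i * f i 0 r) - α r * a 0, ?_⟩
  subst hp
  rw [Finset.sum_mul]
  have key : ∀ i ∈ Finset.range (n + 1),
      ι (a i) * X ^ i * ι r = ∑ j ∈ Finset.range (i + 1), ι (a i * f i j r) * X ^ j := by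
    intro i _
    rw [mul_assoc, hf, Finset.mul_sum]
    simp [map_mul, mul_assoc]
  rw [Finset.sum_congr rfl key]
  rw [Finset.sum_comm' (t' := Finset.range (n + 1)) (s' := fun j => Finset.Icc j n)
      (by intro i j; simp only [Finset.mem_range, Finset.mem_Icc, Nat.lt_succ_iff]; omega)]
  have pull : ∀ j, ∑ i ∈ Finset.Icc j n, ι (a i * f i j r) * X ^ j
      = ι (∑ i ∈ Finset.Icc j n, a i * f i j r) * X ^ j := by
    intro j; rw [map_sum, Finset.sum_mul]
  simp only [pull]
  rw [Finset.mul_sum]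
  rw [Finset.sum_range_succ', Finset.sum_range_succ']
  have h1 : ∀ j < n, ι (∑ i ∈ Finset.Icc (j+1) n, a i * f i (j+1) r)
      = ι (α r) * ι (a (j+1)) := by
    intro j hj
    rw [← map_mul, heig r (j+1) (by omega) (by omega)]
  rw [Finset.sum_congr rfl (fun j hj => by
    rw [h1 j (Finset.mem_range.mp hj), mul_assoc])]
  rw [add_assoc]
  congr 1
  rw [pow_zero, mul_one, mul_one, ← map_mul, map_sub]
  abel
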